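/- Let D be a finite-dimensional division F-algebra, α ∈ D, and suppose the subfield F(α) generated by F and α is a maximal subfield of D. Then there exists γ ∈ D∖{0} such that D is generated as an F-algebra by α and γαγ⁻¹. -/

import Mathlib

open Module Polynomial



namespace HR

variable {F D : Type*} [Field F] [DivisionRing D] [Algebra F D]

theorem inv_mem_subalg [FiniteDimensional F D] (S : Subalgebra F D) {x : D} (hx : x ∈ S) :
    x⁻¹ ∈ S := by
  rcases eq_or_ne x 0 with rfl | hx0
  · simpa using S.zero_mem
  · have hxS : (⟨x, hx⟩ : ↥S) ≠ 0 := fun h0 => hx0 (congrArg Subtype.val h0)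
    obtain ⟨y, hy⟩ := FiniteDimensional.exists_mul_eq_one F (K := ↥S) hxS
    have hy' : x * (y : D) = 1 := congrArg Subtype.val hy
    have : x⁻¹ = (y : D) := inv_eq_of_mul_eq_one_right hy'
    rw [this]; exact y.2

/-- Cartan-Brauer-Hua style core lemma. -/
theorem cbh_core [FiniteDimensional F D] (N : Subalgebra F D)
    (hconj : ∀ u : D, u ≠ 0 → ∀ x ∈ N, u * x * u⁻¹ ∈ N) (hN : N ≠ ⊤) :
    ∀ a ∈ N, ∀ b : D, a * b = b * a := by
  intro a ha
  have key : ∀ c : D, c ∉ N → a * c = c * a := by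
    intro c hc
    have hc0 : c ≠ 0 := by rintro rfl; exact hc N.zero_mem
    have h1c : (1 : D) + c ≠ 0 := by
      intro h
      have : c = -1 := by
        have := eq_neg_of_add_eq_zero_right h
        simpa using this
      exact hc (this ▸ N.neg_mem N.one_mem)
    have ha1 : c * a * c⁻¹ ∈ N := hconj c hc0 a ha
    have ha2 : (1 + c) * a * (1 + c)⁻¹ ∈ N := hconj _ h1c a ha
    set a1 := c * a * c⁻¹ with ha1d
    set a2 := (1 + c) * a * (1 + c)⁻¹ with ha2d
    have eq1 : c * a = a1 * c := by
      rw [ha1d, mul_assoc, inv_mul_cancel₀ hc0, mul_one]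
    have eq2 : (1 + c) * a = a2 * (1 + c) := by
      rw [ha2d, mul_assoc, inv_mul_cancel₀ h1c, mul_one]
    have h : a + a1 * c = a2 + a2 * c := by
      have h' := eq2
      rw [add_mul, one_mul, mul_add, mul_one, eq1] at h'
      exact h'
    have eq3 : (a1 - a2) * c = a2 - a := by
      rw [sub_mul]
      rw [sub_eq_sub_iff_add_eq_add, add_comm]
      exact h
    by_cases h12 : a1 = a2
    · have h0 : a2 - a = 0 := by rw [← eq3, h12, sub_self, zero_mul]
      have ha2a : a2 = a := sub_eq_zero.mp h0
      have : c * a = a * c := by rw [eq1, h12, ha2a]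
      exact this.symm
    · exfalso
      apply hc
      have : c = (a1 - a2)⁻¹ * (a2 - a) := by
        rw [← eq3, ← mul_assoc, inv_mul_cancel₀ (sub_ne_zero.mpr h12), one_mul]
      rw [this]
      exact N.mul_mem (inv_mem_subalg N (N.sub_mem ha1 ha2)) (N.sub_mem ha2 ha)
  intro b
  by_cases hb : b ∈ N
  · obtain ⟨c, hc⟩ : ∃ c, c ∉ N := by
      by_contra h
      push_neg at h
      exact hN (by ext z; simpa using h z)
    have hbc : b + c ∉ N := fun h => hc (by simpa using N.sub_mem h hb)
    have h1 := key _ hbc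
    have h2 := key _ hc
    rw [mul_add, add_mul] at h1
    rw [h2] at h1
    exact add_right_cancel h1
  · exact key b hb

theorem exists_conj_notMem [FiniteDimensional F D] {α : D} (hα : ∃ x, α * x ≠ x * α)
    (E : Subalgebra F D) (hE : E ≠ ⊤) : ∃ δ : D, δ ≠ 0 ∧ δ * α * δ⁻¹ ∉ E := by
  by_contra h
  push_neg at h
  set s : Set D := {y | ∃ δ : D, δ ≠ 0 ∧ y = δ * α * δ⁻¹} with hs
  set N := Algebra.adjoin F s with hNdef
  have hNE : N ≤ E := Algebra.adjoin_le (by rintro y ⟨δ, hδ, rfl⟩; exact h δ hδ)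
  have hαN : α ∈ N := Algebra.subset_adjoin ⟨1, one_ne_zero, by simp⟩
  have hNconj : ∀ u : D, u ≠ 0 → ∀ x ∈ N, u * x * u⁻¹ ∈ N := by
    intro u hu x hx
    let φ : D →ₐ[F] D :=
      { toFun := fun z => u * z * u⁻¹
        map_one' := by simp [mul_inv_cancel₀ hu]
        map_mul' := fun z w => by
          show u * (z * w) * u⁻¹ = u * z * u⁻¹ * (u * w * u⁻¹)
          simp [mul_assoc, inv_mul_cancel_left₀ hu]
        map_zero' := by simp
        map_add' := fun z w => by
          show u * (z + w) * u⁻¹ = u * z * u⁻¹ + u * w * u⁻¹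
          rw [mul_add, add_mul]
        commutes' := fun r => by
          show u * algebraMap F D r * u⁻¹ = algebraMap F D r
          rw [← Algebra.commutes r u, mul_assoc, mul_inv_cancel₀ hu, mul_one] }
    have : N.map φ ≤ N := by
      rw [hNdef, AlgHom.map_adjoin]
      apply Algebra.adjoin_mono
      rintro y ⟨z, ⟨δ, hδ, rfl⟩, rfl⟩
      refine ⟨u * δ, mul_ne_zero hu hδ, ?_⟩
      show u * (δ * α * δ⁻¹) * u⁻¹ = _
      rw [mul_inv_rev]
      simp [mul_assoc]
    exact this ⟨x, hx, rfl⟩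
  have hNtop : N ≠ ⊤ := fun h => hE (top_le_iff.mp (h ▸ hNE))
  obtain ⟨x, hx⟩ := hα
  exact hx (cbh_core N hNconj hNtop α hαN x)

end HR


namespace HR

section Indep
variable {Z B : Type*} [Field Z] [DivisionRing B] [Algebra Z B]

/-- Artin–Whaples style independence: over the center, left-multiplications
are independent from right-multiplications. -/
theorem mul_indep (hZ : ∀ b : B, (∀ x, b * x = x * b) → b ∈ (algebraMap Z B).range)
    {ι : Type*} {b : ι → B} (hb : LinearIndependent Z b) (s : Finset ι) :
    ∀ k : ι → B, (∀ x : B, ∑ i ∈ s, k i * x * b i = 0) → ∀ i ∈ s, k i = 0 := by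
  classical
  induction s using Finset.strongInductionOn with
  | _ s ih =>
    intro k hrel
    by_contra hk
    push_neg at hk
    obtain ⟨t, hts, hkt⟩ := hk
    set k' : ι → B := fun i => (k t)⁻¹ * k i with hk'def
    have hrel' : ∀ x : B, ∑ i ∈ s, k' i * x * b i = 0 := by
      intro x
      have : ∑ i ∈ s, k' i * x * b i = (k t)⁻¹ * ∑ i ∈ s, k i * x * b i := by
        rw [Finset.mul_sum]
        refine Finset.sum_congr rfl fun i _ => by rw [hk'def]; noncomm_ring
      rw [this, hrel x, mul_zero]
    have hk't : k' t = 1 := inv_mul_cancel₀ hkt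
    have hcomm : ∀ i ∈ s, ∀ y : B, k' i * y = y * k' i := by
      intro i hi y
      have hrel'' : ∀ x : B, ∑ j ∈ s.erase t, (k' j * y - y * k' j) * x * b j = 0 := by
        intro x
        have h1 := hrel' (y * x)
        have h2 : y * ∑ j ∈ s, k' j * x * b j = 0 := by rw [hrel' x, mul_zero]
        rw [Finset.mul_sum] at h2
        have h3 : ∑ j ∈ s, (k' j * y - y * k' j) * x * b j = 0 := by
          have : ∀ j ∈ s, (k' j * y - y * k' j) * x * b j
              = k' j * (y * x) * b j - y * (k' j * x * b j) := by
            intro j _; noncomm_ring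
          rw [Finset.sum_congr rfl this, Finset.sum_sub_distrib, h1, h2, sub_zero]
        have h4 : ∑ j ∈ s, (k' j * y - y * k' j) * x * b j
            = (k' t * y - y * k' t) * x * b t + ∑ j ∈ s.erase t, (k' j * y - y * k' j) * x * b j :=
          (Finset.add_sum_erase s _ hts).symm
        rw [h3, hk't, one_mul, mul_one, sub_self, zero_mul, zero_mul, zero_add] at h4
        exact h4.symm
      have hz := ih (s.erase t) (Finset.erase_ssubset hts) _ hrel''
      by_cases hit : i = t
      · rw [hit, hk't, one_mul, mul_one]
      · have := hz i (Finset.mem_erase.mpr ⟨hit, hi⟩)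
        exact sub_eq_zero.mp this
    have hcent : ∀ i ∈ s, ∃ z : Z, algebraMap Z B z = k' i := by
      intro i hi
      obtain ⟨z, hzz⟩ := hZ (k' i) (hcomm i hi)
      exact ⟨z, hzz⟩
    set z : ι → Z := fun i => if h : i ∈ s then (hcent i h).choose else 0 with hzdef
    have hzspec : ∀ i ∈ s, algebraMap Z B (z i) = k' i := by
      intro i hi; rw [hzdef]; simp only [dif_pos hi]; exact (hcent i hi).choose_spec
    have hsum : ∑ i ∈ s, z i • b i = 0 := by
      have h1 := hrel' 1
      have : ∀ i ∈ s, k' i * 1 * b i = z i • b i := by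
        intro i hi; rw [mul_one, ← hzspec i hi, Algebra.smul_def]
      rw [Finset.sum_congr rfl this] at h1
      exact h1
    have hzt := linearIndependent_iff'.mp hb s z hsum t hts
    have h01 : (0 : B) = 1 := by
      rw [← map_zero (algebraMap Z B), ← hzt, hzspec t hts, hk't]
    exact zero_ne_one h01
end Indep

end HR


namespace HR

section Density
variable {K V : Type*} [Field K] [AddCommGroup V] [Module K V] [FiniteDimensional K V]

theorem exists_hyperplane (U : Submodule K V) {m : ℕ} (h : finrank K ↥U = m + 1) :
    ∃ (U₀ : Submodule K V) (u : V), U₀ ≤ U ∧ u ∈ U ∧ finrank K ↥U₀ = m ∧ u ∉ U₀ ∧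
      U ≤ U₀ ⊔ Submodule.span K {u} := by
  classical
  let e : Basis (Fin (m + 1)) K ↥U := (finBasis K ↥U).reindex (finCongr h)
  let w : Fin (m + 1) → V := fun i => (e i : V)
  have hw : LinearIndependent K w :=
    e.linearIndependent.map' U.subtype (Submodule.ker_subtype U)
  let u : V := w (Fin.last m)
  let U₀ : Submodule K V := Submodule.span K (Set.range fun i : Fin m => w i.castSucc)
  have hUspan : U = Submodule.span K (Set.range w) := by
    have h1 : Submodule.span K (Set.range w) = Submodule.map U.subtype (Submodule.span K (Set.range ⇑e)) := by
      rw [Submodule.map_span]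
      congr 1
      rw [← Set.range_comp]
      rfl
    rw [h1, e.span_eq, Submodule.map_top, Submodule.range_subtype]
  refine ⟨U₀, u, ?_, ?_, ?_, ?_, ?_⟩
  · rw [hUspan]
    apply Submodule.span_mono
    rintro x ⟨i, rfl⟩
    exact ⟨i.castSucc, rfl⟩
  · exact (e (Fin.last m)).2
  · have hli : LinearIndependent K fun i : Fin m => w i.castSucc :=
      hw.comp _ (Fin.castSucc_injective m)
    rw [finrank_span_eq_card hli, Fintype.card_fin]
  · have : Set.range (fun i : Fin m => w i.castSucc) = w '' (Set.range Fin.castSucc) := by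
      rw [← Set.range_comp]; rfl
    show u ∉ U₀
    show u ∉ Submodule.span K (Set.range fun i : Fin m => w i.castSucc)
    rw [this]
    apply hw.notMem_span_image
    simp only [Set.mem_range, not_exists]
    intro j
    exact fun h => (Fin.castSucc_lt_last j).ne h
  · rw [hUspan]
    rw [Submodule.span_le]
    rintro x ⟨i, rfl⟩
    rcases Fin.eq_castSucc_or_eq_last i with ⟨j, rfl⟩ | rfl
    · exact Submodule.mem_sup_left (Submodule.subset_span ⟨j, rfl⟩)
    · exact Submodule.mem_sup_right (Submodule.subset_span rfl)

theorem density_aux (W : Subalgebra K (Module.End K V))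
    (hsimp : ∀ v x : V, v ≠ 0 → ∃ w ∈ W, w v = x)
    (hend : ∀ ψ : Module.End K V, (∀ w ∈ W, ψ * w = w * ψ) →
      ∃ c : K, ψ = c • (1 : Module.End K V)) :
    ∀ (U : Submodule K V) (v : V), v ∉ U → ∃ w ∈ W, (∀ u ∈ U, w u = 0) ∧ w v ≠ 0 := by
  classical
  suffices H : ∀ (n : ℕ) (U : Submodule K V) (v : V), finrank K ↥U = n → v ∉ U →
      ∃ w ∈ W, (∀ u ∈ U, w u = 0) ∧ w v ≠ 0 by
    exact fun U v hv => H _ U v rfl hv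
  intro n
  induction n using Nat.strong_induction_on with
  | _ n ih =>
    intro U v hU hv
    rcases Nat.eq_zero_or_eq_succ_pred n with h0 | hsucc
    · subst h0
      have hUbot : U = ⊥ := Submodule.finrank_eq_zero.mp hU
      have hv0 : v ≠ 0 := fun h => hv (h ▸ (hUbot ▸ Submodule.zero_mem U))
      obtain ⟨w, hwW, hwv⟩ := hsimp v v hv0
      refine ⟨w, hwW, ?_, by rw [hwv]; exact hv0⟩
      intro u hu
      rw [hUbot] at hu
      have hu0 : u = 0 := by simpa using hu
      rw [hu0, map_zero]
    · set m := n.pred with hm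
      rw [hsucc] at hU
      have hlt : m < n := by omega
      rw [Nat.succ_eq_add_one] at hU
      obtain ⟨U₀, u, hU₀U, huU, hrank, huU₀, hUle⟩ := exists_hyperplane U hU
      have hAu : ∀ x : V, ∃ w ∈ W, (∀ y ∈ U₀, w y = 0) ∧ w u = x := by
        obtain ⟨w₁, hw₁W, hw₁0, hw₁u⟩ := ih m hlt U₀ u hrank huU₀
        intro x
        obtain ⟨sw, hswW, hsw⟩ := hsimp (w₁ u) x hw₁u
        refine ⟨sw * w₁, W.mul_mem hswW hw₁W, fun y hy => ?_, ?_⟩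
        · show sw (w₁ y) = 0
          rw [hw₁0 y hy, map_zero]
        · show sw (w₁ u) = x
          exact hsw
      by_contra hcon
      push_neg at hcon
      choose wx hwxW hwx0 hwxu using hAu
      have key : ∀ w ∈ W, (∀ y ∈ U₀, w y = 0) → w v = wx (w u) v := by
        intro w hwW h0
        have hdiff : ∀ y ∈ U, (w - wx (w u)) y = 0 := by
          intro y hy
          obtain ⟨y₀, hy₀, yu, hyu, rfl⟩ := Submodule.mem_sup.mp (hUle hy)
          obtain ⟨c, rfl⟩ := Submodule.mem_span_singleton.mp hyu
          have e1 : (w - wx (w u)) y₀ = 0 := by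
            rw [LinearMap.sub_apply, h0 y₀ hy₀, hwx0 (w u) y₀ hy₀, sub_zero]
          have e2 : (w - wx (w u)) u = 0 := by
            rw [LinearMap.sub_apply, hwxu (w u), sub_self]
          rw [map_add, map_smul, e1, e2, smul_zero, add_zero]
        have h := hcon (w - wx (w u)) (W.sub_mem hwW (hwxW (w u))) hdiff
        rw [LinearMap.sub_apply] at h
        exact sub_eq_zero.mp h
      have hwx0' : ∀ (x : V) (y : V), y ∈ U₀ → wx x y = 0 := fun x y hy => hwx0 x y hy
      set φ : Module.End K V :=
        { toFun := fun x => wx x v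
          map_add' := fun x y => by
            show wx (x + y) v = wx x v + wx y v
            have hu2 : (wx x + wx y) u = x + y := by
              rw [LinearMap.add_apply, hwxu, hwxu]
            have hk := key (wx x + wx y) (W.add_mem (hwxW x) (hwxW y))
              (fun z hz => by rw [LinearMap.add_apply, hwx0' x z hz, hwx0' y z hz, add_zero])
            rw [LinearMap.add_apply, hu2] at hk
            exact hk.symm
          map_smul' := fun c x => by
            show wx (c • x) v = c • wx x v
            have hu2 : (c • wx x) u = c • x := by rw [LinearMap.smul_apply, hwxu]
            have hk := key (c • wx x) (W.smul_mem (hwxW x) c)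
              (fun z hz => by rw [LinearMap.smul_apply, hwx0' x z hz, smul_zero])
            rw [LinearMap.smul_apply, hu2] at hk
            exact hk.symm } with hφdef
      have hφapp : ∀ x, φ x = wx x v := fun x => rfl
      have hφcomm : ∀ w' ∈ W, φ * w' = w' * φ := by
        intro w' hw'
        apply LinearMap.ext
        intro x
        rw [Module.End.mul_apply, Module.End.mul_apply, hφapp, hφapp]
        have hu2 : (w' * wx x) u = w' x := by rw [Module.End.mul_apply, hwxu]
        have hk := key (w' * wx x) (W.mul_mem hw' (hwxW x))
          (fun z hz => by rw [Module.End.mul_apply, hwx0' x z hz, map_zero])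
        rw [Module.End.mul_apply, hu2] at hk
        exact hk.symm
      obtain ⟨c, hc⟩ := hend φ hφcomm
      have hfin : ∀ w ∈ W, (∀ y ∈ U₀, w y = 0) → w (v - c • u) = 0 := by
        intro w hwW h0
        have h1 : w v = wx (w u) v := key w hwW h0
        have h2 : φ (w u) = c • (w u) := by rw [hc]; rfl
        rw [hφapp] at h2
        rw [map_sub, map_smul, h1, h2, sub_self]
      have hvc : v - c • u ∈ U₀ := by
        by_contra hvc
        obtain ⟨w, hwW, h0, hne⟩ := ih m hlt U₀ _ hrank hvc
        exact hne (hfin w hwW h0)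
      apply hv
      have : v = (v - c • u) + c • u := by abel
      rw [this]
      exact U.add_mem (hU₀U hvc) (U.smul_mem c huU)

theorem density (W : Subalgebra K (Module.End K V))
    (hsimp : ∀ v x : V, v ≠ 0 → ∃ w ∈ W, w v = x)
    (hend : ∀ ψ : Module.End K V, (∀ w ∈ W, ψ * w = w * ψ) →
      ∃ c : K, ψ = c • (1 : Module.End K V)) :
    W = ⊤ := by
  classical
  rcases subsingleton_or_nontrivial V with hV | hV
  · rw [eq_top_iff]
    rintro φ -
    have : φ = 0 := LinearMap.ext fun x => Subsingleton.elim _ _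
    rw [this]
    exact W.zero_mem
  · rw [eq_top_iff]
    rintro φ -
    set b := finBasis K V with hb
    have hstep : ∀ i, ∃ w ∈ W, (∀ j, j ≠ i → w (b j) = 0) ∧ w (b i) = φ (b i) := by
      intro i
      have hbi : b i ∉ Submodule.span K (⇑b '' {i}ᶜ) :=
        b.linearIndependent.notMem_span_image (by simp)
      obtain ⟨w₁, hw₁W, hw₁0, hw₁⟩ := density_aux W hsimp hend _ _ hbi
      obtain ⟨s, hsW, hs⟩ := hsimp (w₁ (b i)) (φ (b i)) hw₁
      refine ⟨s * w₁, W.mul_mem hsW hw₁W, fun j hj => ?_, ?_⟩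
      · show s (w₁ (b j)) = 0
        rw [hw₁0 (b j) (Submodule.subset_span ⟨j, hj, rfl⟩), map_zero]
      · show s (w₁ (b i)) = φ (b i)
        exact hs
    choose wi hwiW hwi0 hwii using hstep
    set w : Module.End K V := ∑ i, wi i with hw
    have hwW : w ∈ W := Subalgebra.sum_mem W fun i _ => hwiW i
    have : φ = w := by
      apply b.ext
      intro j
      rw [hw, LinearMap.sum_apply, Finset.sum_eq_single j (fun i _ hij => hwi0 i j (Ne.symm hij))
        (fun h => absurd (Finset.mem_univ j) h), hwii]
    rw [this]
    exact hwW

end Density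

end HR


namespace HR

/-- If `K` is a self-centralizing subfield of a finite-dimensional division algebra `B`
whose center is exactly `Z`, then `dim_Z B = (dim_Z K)^2`. -/
theorem factF (Z B K : Type*) [Field Z] [DivisionRing B] [Algebra Z B] [FiniteDimensional Z B]
    [Field K] [Algebra Z K] (f : K →ₐ[Z] B)
    (hKmax : ∀ x : B, (∀ k : K, x * f k = f k * x) → ∃ k : K, f k = x)
    (hZ : ∀ b : B, (∀ x, b * x = x * b) → b ∈ (algebraMap Z B).range) :
    finrank Z B = finrank Z K * finrank Z K := by
  classical
  letI : Module K B := Module.compHom B f.toRingHom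
  have hsmul : ∀ (k : K) (x : B), k • x = f k * x := fun k x => rfl
  haveI : IsScalarTower Z K B := ⟨fun z k b => by
    show f (z • k) * b = z • (f k * b)
    rw [map_smul, Algebra.smul_def, Algebra.smul_def, mul_assoc]⟩
  haveI : FiniteDimensional K B := FiniteDimensional.right Z K B
  haveI : SMulCommClass K K B := ⟨fun k k' x => by
    show f k * (f k' * x) = f k' * (f k * x)
    rw [← mul_assoc, ← map_mul, mul_comm k k', map_mul, mul_assoc]⟩
  have hfinj : Function.Injective f := f.toRingHom.injective
  -- right multiplications as K-linear endomorphisms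
  let rmulE : B → Module.End K B := fun c =>
    { toFun := fun x => x * c
      map_add' := fun x y => add_mul x y c
      map_smul' := fun k x => by
        show (f k * x) * c = f k * (x * c)
        rw [mul_assoc] }
  have hrmul_apply : ∀ c x, rmulE c x = x * c := fun c x => rfl
  let WS : Submodule K (Module.End K B) := Submodule.span K (Set.range rmulE)
  have h1W : (1 : Module.End K B) ∈ WS := by
    have h : rmulE 1 = 1 := by
      apply LinearMap.ext; intro x; show x * 1 = x; rw [mul_one]
    exact h ▸ Submodule.subset_span ⟨1, rfl⟩
  have hgenmul : ∀ (c c' : B), rmulE c * rmulE c' = rmulE (c' * c) := by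
    intro c c'
    apply LinearMap.ext; intro x
    show (x * c') * c = x * (c' * c)
    rw [mul_assoc]
  have hmulW : ∀ x y : Module.End K B, x ∈ WS → y ∈ WS → x * y ∈ WS := by
    intro x y hx hy
    induction hx using Submodule.span_induction with
    | mem g hg =>
      obtain ⟨c, rfl⟩ := hg
      induction hy using Submodule.span_induction with
      | mem g' hg' =>
        obtain ⟨c', rfl⟩ := hg'
        rw [hgenmul]
        exact Submodule.subset_span ⟨c' * c, rfl⟩
      | zero => rw [mul_zero]; exact WS.zero_mem
      | add y1 y2 _ _ h1 h2 => rw [mul_add]; exact WS.add_mem h1 h2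
      | smul k y1 _ h1 => rw [mul_smul_comm]; exact WS.smul_mem k h1
    | zero => rw [zero_mul]; exact WS.zero_mem
    | add x1 x2 _ _ h1 h2 => rw [add_mul]; exact WS.add_mem h1 h2
    | smul k x1 _ h1 => rw [smul_mul_assoc]; exact WS.smul_mem k h1
  let W : Subalgebra K (Module.End K B) := WS.toSubalgebra h1W hmulW
  have hWmem : ∀ g, g ∈ W ↔ g ∈ WS := fun g => Iff.rfl
  have hsimp : ∀ v x : B, v ≠ 0 → ∃ w ∈ W, w v = x := by
    intro v x hv
    refine ⟨rmulE (v⁻¹ * x), Submodule.subset_span ⟨_, rfl⟩, ?_⟩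
    show v * (v⁻¹ * x) = x
    rw [← mul_assoc, mul_inv_cancel₀ hv, one_mul]
  have hend : ∀ ψ : Module.End K B, (∀ w ∈ W, ψ * w = w * ψ) →
      ∃ c : K, ψ = c • (1 : Module.End K B) := by
    intro ψ hψ
    have hψb : ∀ b : B, ψ b = ψ 1 * b := by
      intro b
      have h := hψ (rmulE b) (Submodule.subset_span ⟨b, rfl⟩)
      have h2 := congrArg (fun g : Module.End K B => g 1) h
      simp only [Module.End.mul_apply] at h2
      rw [hrmul_apply, hrmul_apply, one_mul] at h2
      exact h2
    have hcomm : ∀ k : K, ψ 1 * f k = f k * ψ 1 := by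
      intro k
      have h1 : ψ (f k) = ψ 1 * f k := hψb (f k)
      have h2 : ψ (f k) = f k * ψ 1 := by
        have h3 : ψ (k • (1 : B)) = k • ψ 1 := map_smul ψ k 1
        rw [hsmul, hsmul, mul_one] at h3
        exact h3
      rw [← h1, h2]
    obtain ⟨k, hk⟩ := hKmax (ψ 1) hcomm
    refine ⟨k, ?_⟩
    apply LinearMap.ext; intro x
    show ψ x = (k • (1 : Module.End K B)) x
    rw [hψb x, LinearMap.smul_apply, Module.End.one_apply, hsmul, hk]
  have hWtop := density W hsimp hend
  set d := finrank Z B with hd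
  let bB := finBasis Z B
  let fam : Fin d → Module.End K B := fun t => rmulE (bB t)
  have hfamind : LinearIndependent K fam := by
    rw [linearIndependent_iff']
    intro s g hsum i hi
    have happ : ∀ x : B, ∑ j ∈ s, f (g j) * x * bB j = 0 := by
      intro x
      have h := congrArg (fun h : Module.End K B => h x) hsum
      simp only [LinearMap.zero_apply] at h
      rw [show ((∑ j ∈ s, g j • fam j) x) = ∑ j ∈ s, f (g j) * x * bB j from ?_] at h
      · exact h
      · rw [LinearMap.sum_apply]
        refine Finset.sum_congr rfl fun j _ => ?_
        rw [LinearMap.smul_apply, hsmul, hrmul_apply, mul_assoc]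
    have h0 := mul_indep hZ bB.linearIndependent s (fun j => f (g j)) happ i hi
    have h0' : f (g i) = 0 := h0
    exact hfinj (by rw [h0', map_zero])
  have hfamspan : ∀ c : B, rmulE c ∈ Submodule.span K (Set.range fam) := by
    intro c
    have hre : rmulE c = ∑ t, (algebraMap Z K (bB.repr c t)) • fam t := by
      apply LinearMap.ext; intro x
      rw [LinearMap.sum_apply, hrmul_apply]
      have hterm : ∀ t, ((algebraMap Z K (bB.repr c t)) • fam t) x
          = x * ((bB.repr c t) • bB t) := by
        intro t
        rw [LinearMap.smul_apply, hsmul, hrmul_apply, AlgHom.commutes, Algebra.smul_def,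
          ← mul_assoc, Algebra.commutes, mul_assoc]
      rw [Finset.sum_congr rfl fun t _ => hterm t, ← Finset.mul_sum]
      congr 1
      exact (bB.sum_repr c).symm
    rw [hre]
    exact Submodule.sum_mem _ fun t _ =>
      Submodule.smul_mem _ _ (Submodule.subset_span ⟨t, rfl⟩)
  have hspan_top : Submodule.span K (Set.range fam) = ⊤ := by
    rw [eq_top_iff]
    intro g _
    have hg : g ∈ WS := by
      have : g ∈ W := hWtop ▸ Algebra.mem_top
      exact this
    refine Submodule.span_le.mpr ?_ hg
    rintro y ⟨c, rfl⟩
    exact hfamspan c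
  let bfam : Basis (Fin d) K (Module.End K B) := Basis.mk hfamind (by rw [hspan_top])
  have hdimEnd : finrank K (Module.End K B) = d := by
    rw [finrank_eq_card_basis bfam, Fintype.card_fin]
  have hdimEnd2 : finrank K (Module.End K B) = finrank K B * finrank K B :=
    Module.finrank_linearMap K K B B
  have htower : finrank Z K * finrank K B = finrank Z B :=
    Module.finrank_mul_finrank Z K B
  have hs0 : 0 < finrank K B := finrank_pos
  have h1 : finrank Z K * finrank K B = finrank K B * finrank K B := by
    rw [htower, ← hd, ← hdimEnd, hdimEnd2]
  have hseq : finrank Z K = finrank K B := Nat.eq_of_mul_eq_mul_right hs0 h1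
  show finrank Z B = finrank Z K * finrank Z K
  rw [← htower, hseq]

end HR


namespace HR

variable {F D : Type*} [Field F] [DivisionRing D] [Algebra F D]

theorem li_of_det {ι : Type*} [Fintype ι] [DecidableEq ι] (v : ι → D) (ξ : ι → (D →ₗ[F] F))
    (h : (Matrix.of fun k i => ξ k (v i)).det ≠ 0) : LinearIndependent F v := by
  rw [Fintype.linearIndependent_iff]
  intro g hg
  set M := Matrix.of fun k i => ξ k (v i) with hM
  have hMv : M.mulVec g = 0 := by
    funext k
    show ∑ i, M k i * g i = 0
    have hterm : ∀ i, M k i * g i = ξ k (g i • v i) := fun i => by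
      rw [map_smul, smul_eq_mul, mul_comm]; rfl
    rw [Finset.sum_congr rfl fun i _ => hterm i, ← map_sum, hg, map_zero]
  have hMdet : IsUnit M.det := isUnit_iff_ne_zero.mpr h
  have h2 := congrArg (fun w => M⁻¹.mulVec w) hMv
  simp only [Matrix.mulVec_mulVec, Matrix.nonsing_inv_mul M hMdet, Matrix.one_mulVec,
    Matrix.mulVec_zero] at h2
  exact fun i => congrFun h2 i

theorem exists_avoid [FiniteDimensional F D] [Infinite F] (α : D) {J : Type*} [Fintype J]
    (E : J → Subalgebra F D) (hW : ∀ j, ∃ δ : D, δ ≠ 0 ∧ δ * α * δ⁻¹ ∉ E j) :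
    ∃ γ : D, γ ≠ 0 ∧ ∀ j, γ * α * γ⁻¹ ∉ E j := by
  classical
  set n := finrank F D with hn
  set bD := finBasis F D with hbD
  set linP : (D →ₗ[F] F) → MvPolynomial (Fin n) F :=
    fun ℓ => ∑ t, MvPolynomial.C (ℓ (bD t)) * MvPolynomial.X t with hlinPdef
  have hlinP : ∀ (ℓ : D →ₗ[F] F) (x : Fin n → F),
      MvPolynomial.eval x (linP ℓ) = ℓ (∑ t, x t • bD t) := by
    intro ℓ x
    rw [hlinPdef]
    simp only [map_sum, map_mul, MvPolynomial.eval_C, MvPolynomial.eval_X, map_smul,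
      smul_eq_mul]
    exact Finset.sum_congr rfl fun t _ => mul_comm _ _
  choose δ hδ0 hδE using hW
  set r : J → ℕ := fun j => finrank F ↥(E j) with hr
  set e : (j : J) → Fin (r j) → D := fun j i => ((finBasis F ↥(E j)) i : D) with he
  set fml : (j : J) → Option (Fin (r j)) → (D →ₗ[F] D) := fun j o =>
    o.elim (LinearMap.mulRight F α) (fun i => LinearMap.mulLeft F (e j i)) with hfml
  have hfml_some : ∀ j i (γ : D), fml j (some i) γ = e j i * γ := fun j i γ => rfl
  have hfml_none : ∀ j (γ : D), fml j none γ = γ * α := fun j γ => rfl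
  have hei : ∀ j, LinearIndependent F (fun i => e j i) := fun j =>
    (finBasis F ↥(E j)).linearIndependent.map'
      (Subalgebra.toSubmodule (E j)).subtype (Submodule.ker_subtype _)
  have hspanE : ∀ j, Submodule.span F (Set.range fun i => e j i)
      = Subalgebra.toSubmodule (E j) := by
    intro j
    have h1 : (fun i => e j i) = (Subalgebra.toSubmodule (E j)).subtype ∘ (finBasis F ↥(E j)) := rfl
    have h2 : Submodule.span F (Set.range (finBasis F ↥(E j))) = ⊤ :=
      Basis.span_eq (finBasis F ↥(E j))
    rw [h1, Set.range_comp, Submodule.span_image, h2, Submodule.map_top,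
      Submodule.range_subtype]
  have hkey : ∀ (j : J) (γ : D), γ ≠ 0 →
      (LinearIndependent F (fun o => fml j o γ) ↔ γ * α * γ⁻¹ ∉ E j) := by
    intro j γ hγ
    rw [linearIndependent_option]
    have hc : ((fun o => fml j o γ) ∘ some) = fun i => e j i * γ := rfl
    have hmulinj : LinearMap.ker (LinearMap.mulRight F γ) = ⊥ := by
      rw [LinearMap.ker_eq_bot]
      intro a b hab
      exact mul_right_cancel₀ hγ hab
    have hindep : LinearIndependent F ((fun o => fml j o γ) ∘ some) := by
      rw [hc]
      have : (fun i => e j i * γ) = (LinearMap.mulRight F γ) ∘ (fun i => e j i) := rfl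
      rw [this]
      exact (hei j).map' _ hmulinj
    have hspan : Submodule.span F (Set.range ((fun o => fml j o γ) ∘ some))
        = Submodule.map (LinearMap.mulRight F γ) (Subalgebra.toSubmodule (E j)) := by
      rw [hc]
      have : (fun i => e j i * γ) = (LinearMap.mulRight F γ) ∘ (fun i => e j i) := rfl
      rw [this, Set.range_comp, Submodule.span_image, hspanE]
    have hmem : γ * α ∈ Submodule.map (LinearMap.mulRight F γ) (Subalgebra.toSubmodule (E j))
        ↔ γ * α * γ⁻¹ ∈ E j := by
      constructor
      · rintro ⟨s, hs, hsg⟩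
        have : γ * α * γ⁻¹ = s := by
          have hsg' : s * γ = γ * α := hsg
          rw [← hsg', mul_assoc, mul_inv_cancel₀ hγ, mul_one]
        rw [this]
        exact hs
      · intro hs
        refine ⟨γ * α * γ⁻¹, hs, ?_⟩
        show (γ * α * γ⁻¹) * γ = γ * α
        rw [mul_assoc, inv_mul_cancel₀ hγ, mul_one]
    constructor
    · rintro ⟨-, hnone⟩
      rw [hspan, hfml_none] at hnone
      exact fun hmem' => hnone (hmem.mpr hmem')
    · intro hnotin
      refine ⟨hindep, ?_⟩
      rw [hspan, hfml_none]
      exact fun hmem' => hnotin (hmem.mp hmem')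
  -- coordinates adapted to each witness
  have hwind : ∀ j, LinearIndependent F (fun o => fml j o (δ j)) := fun j =>
    (hkey j (δ j) (hδ0 j)).mpr (hδE j)
  set S : (j : J) → Submodule F D := fun j =>
    Submodule.span F (Set.range fun o => fml j o (δ j)) with hS
  set Bj : (j : J) → Basis (Option (Fin (r j))) F ↥(S j) := fun j => Basis.span (hwind j)
    with hBj
  have hcompl : ∀ j, ∃ q, IsCompl (S j) q := fun j => Submodule.exists_isCompl (S j)
  choose q hq using hcompl
  set π : (j : J) → D →ₗ[F] ↥(S j) := fun j => Submodule.linearProjOfIsCompl _ _ (hq j) with hπ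
  set ξ : (j : J) → Option (Fin (r j)) → (D →ₗ[F] F) := fun j k =>
    ((Bj j).coord k).comp (π j) with hξ
  have hξw : ∀ j k i, ξ j k (fml j i (δ j)) = (1 : Matrix (Option (Fin (r j)))
      (Option (Fin (r j))) F) k i := by
    intro j k i
    have hmem : fml j i (δ j) ∈ S j := Submodule.subset_span ⟨i, rfl⟩
    have hπa : π j (fml j i (δ j)) = ⟨fml j i (δ j), hmem⟩ :=
      Submodule.linearProjOfIsCompl_apply_left (hq j) ⟨fml j i (δ j), hmem⟩
    have hBji : (Bj j) i = ⟨fml j i (δ j), hmem⟩ := by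
      apply Subtype.ext
      rw [hBj]
      exact congrArg Subtype.val (Module.Basis.span_apply (hwind j) i)
    show ((Bj j).coord k) (π j (fml j i (δ j))) = _
    rw [hπa, ← hBji, Basis.coord_apply, Basis.repr_self, Finsupp.single_apply,
      Matrix.one_apply]
    simp [eq_comm]
  set Pm : (j : J) → Matrix (Option (Fin (r j))) (Option (Fin (r j)))
      (MvPolynomial (Fin n) F) := fun j => Matrix.of fun k i => linP ((ξ j k).comp (fml j i))
    with hPm
  set pj : J → MvPolynomial (Fin n) F := fun j => (Pm j).det with hpjdef
  have hevalP : ∀ (j : J) (x : Fin n → F), MvPolynomial.eval x (pj j)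
      = (Matrix.of fun k i => ξ j k (fml j i (∑ t, x t • bD t))).det := by
    intro j x
    rw [hpjdef]
    rw [RingHom.map_det]
    congr 1
    funext k i
    show MvPolynomial.eval x (linP ((ξ j k).comp (fml j i))) = _
    rw [hlinP]
    rfl
  have hpj : ∀ j, pj j ≠ 0 := by
    intro j h0
    have h1 := hevalP j (fun t => bD.repr (δ j) t)
    rw [h0, map_zero] at h1
    have hx : (∑ t, (bD.repr (δ j) t) • bD t) = δ j := bD.sum_repr (δ j)
    rw [hx] at h1
    have hid : (Matrix.of fun k i => ξ j k (fml j i (δ j)))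
        = (1 : Matrix (Option (Fin (r j))) (Option (Fin (r j))) F) := by
      funext k i
      exact hξw j k i
    rw [hid, Matrix.det_one] at h1
    exact one_ne_zero h1.symm
  obtain ⟨t0, ht0⟩ : ∃ t0, bD.repr 1 t0 ≠ 0 := by
    by_contra h
    push_neg at h
    have h1 : bD.repr 1 = 0 := by
      ext t; exact h t
    have : (1 : D) = 0 := by
      apply bD.repr.injective
      rw [h1, map_zero]
    exact one_ne_zero this
  set ξ0 := bD.coord t0 with hξ0
  set p0 := linP ξ0 with hp0def
  have hp0 : p0 ≠ 0 := by
    intro h0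
    have h1 := hlinP ξ0 (fun t => bD.repr 1 t)
    rw [← hp0def, h0, map_zero] at h1
    have hx : (∑ t, (bD.repr 1 t) • bD t) = 1 := bD.sum_repr 1
    rw [hx] at h1
    exact ht0 (by rw [hξ0] at h1; exact h1.symm ▸ rfl)
  set P := p0 * ∏ j, pj j with hPdef
  have hP : P ≠ 0 := mul_ne_zero hp0 (Finset.prod_ne_zero_iff.mpr fun j _ => hpj j)
  obtain ⟨x, hx⟩ : ∃ x, MvPolynomial.eval x P ≠ 0 := by
    by_contra h
    push_neg at h
    exact hP (MvPolynomial.funext fun x => by rw [h x, map_zero])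
  set γ := ∑ t, x t • bD t with hγdef
  rw [hPdef, map_mul, map_prod] at hx
  have hfac := mul_ne_zero_iff.mp hx
  have h0γ : ξ0 γ ≠ 0 := by
    have := hfac.1
    rw [hlinP] at this
    exact this
  have hγ0 : γ ≠ 0 := fun h => h0γ (by rw [h, map_zero])
  refine ⟨γ, hγ0, fun j => ?_⟩
  have hdetj : MvPolynomial.eval x (pj j) ≠ 0 :=
    Finset.prod_ne_zero_iff.mp hfac.2 j (Finset.mem_univ j)
  rw [hevalP j x] at hdetj
  exact (hkey j γ hγ0).mp (li_of_det _ (ξ j) hdetj)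

end HR


namespace HR

set_option maxHeartbeats 1000000 in
theorem main (F : Type*) [Field F] (D : Type*) [DivisionRing D] [Algebra F D]
    [FiniteDimensional F D] (α : D)
    (hmax : ∀ K : Subalgebra F D, (∀ x ∈ K, ∀ y ∈ K, x * y = y * x) →
      Algebra.adjoin F {α} ≤ K → K = Algebra.adjoin F {α}) :
    ∃ γ : D, γ ≠ 0 ∧ Algebra.adjoin F {α, γ * α * γ⁻¹} = ⊤ := by
  classical
  by_cases hDcomm : ∀ x y : D, x * y = y * x
  · refine ⟨1, one_ne_zero, ?_⟩
    have h1 : (1 : D) * α * (1 : D)⁻¹ = α := by simp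
    rw [h1, Set.pair_eq_singleton]
    exact (hmax ⊤ (fun x _ y _ => hDcomm x y) le_top).symm
  · push_neg at hDcomm
    obtain ⟨x₀, y₀, hxy₀⟩ := hDcomm
    haveI : Infinite F := by
      by_contra hF
      rw [not_infinite_iff_finite] at hF
      haveI : Finite D := Module.finite_of_finite F
      letI : Field D := littleWedderburn D
      exact hxy₀ (mul_comm x₀ y₀)
    set K := Algebra.adjoin F {α} with hKdef
    have hαK : α ∈ K := Algebra.self_mem_adjoin_singleton F α
    letI : CommRing ↥K := Algebra.adjoinCommRingOfComm F (by
      rintro a ha b hb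
      rw [Set.mem_singleton_iff] at ha hb
      rw [ha, hb])
    have hKcomm : ∀ x ∈ K, ∀ y ∈ K, x * y = y * x := fun x hx y hy =>
      congrArg Subtype.val (mul_comm (⟨x, hx⟩ : ↥K) ⟨y, hy⟩)
    have hC : ∀ x : D, α * x = x * α → x ∈ K := by
      intro x hcx
      have hpair : ∀ a ∈ ({α, x} : Set D), ∀ b ∈ ({α, x} : Set D), a * b = b * a := by
        intro a ha b hb
        rcases ha with rfl | ha
        · rcases hb with rfl | hb
          · rfl
          · rw [Set.mem_singleton_iff] at hb; rw [hb]; exact hcx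
        · rw [Set.mem_singleton_iff] at ha
          rcases hb with rfl | hb
          · rw [ha]; exact hcx.symm
          · rw [Set.mem_singleton_iff] at hb; rw [ha, hb]
      letI : CommRing ↥(Algebra.adjoin F {α, x}) := Algebra.adjoinCommRingOfComm F hpair
      have hcomm' : ∀ a ∈ Algebra.adjoin F {α, x}, ∀ b ∈ Algebra.adjoin F {α, x},
          a * b = b * a := fun a ha b hb =>
        congrArg Subtype.val (mul_comm (⟨a, ha⟩ : ↥(Algebra.adjoin F {α, x})) ⟨b, hb⟩)
      have heq := hmax _ hcomm'
        (Algebra.adjoin_mono (Set.singleton_subset_iff.mpr (Set.mem_insert α {x})))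
      have hx : x ∈ Algebra.adjoin F {α, x} :=
        Algebra.subset_adjoin (Set.mem_insert_of_mem α rfl)
      rw [heq] at hx
      exact hx
    have hαnc : ∃ x, α * x ≠ x * α := by
      by_contra h
      push_neg at h
      have hKtop : K = ⊤ := by
        rw [eq_top_iff]
        intro z _
        exact hC z (h z)
      exact hxy₀ (hKcomm x₀ (hKtop ▸ Algebra.mem_top) y₀ (hKtop ▸ Algebra.mem_top))
    letI : Field ↥K := fieldOfFiniteDimensional F ↥K
    have hcoeInv : ∀ u : ↥K, ((u⁻¹ : ↥K) : D) = (u : D)⁻¹ := by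
      intro u
      rcases eq_or_ne u 0 with rfl | hu
      · rw [inv_zero]
        show ((0 : ↥K) : D) = (0 : D)⁻¹
        rw [inv_zero, ZeroMemClass.coe_zero]
      · have h1 : u * u⁻¹ = 1 := mul_inv_cancel₀ hu
        have h2 : (u : D) * ((u⁻¹ : ↥K) : D) = 1 := congrArg Subtype.val h1
        exact (inv_eq_of_mul_eq_one_right h2).symm
    haveI hFin : Finite (IntermediateField F ↥K) := by
      rw [← Field.exists_primitive_element_iff_finite_intermediateField]
      refine ⟨Algebra.IsAlgebraic.of_finite F ↥K, ⟨⟨α, hαK⟩, ?_⟩⟩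
      have hadj : Algebra.adjoin F {(⟨α, hαK⟩ : ↥K)} = ⊤ := by
        apply Subalgebra.map_injective (f := K.val) Subtype.val_injective
        rw [AlgHom.map_adjoin, Algebra.map_top, Subalgebra.range_val]
        have himg : (K.val '' {(⟨α, hαK⟩ : ↥K)}) = {α} := by
          rw [Set.image_singleton]; rfl
        rw [himg, ← hKdef]
      rw [eq_top_iff]
      intro z _
      exact IntermediateField.algebra_adjoin_le_adjoin F _ (hadj ▸ Algebra.mem_top)
    set jE : IntermediateField F ↥K → Subalgebra F D := fun L =>
      Subalgebra.centralizer F (K.val '' (L : Set ↥K)) with hjE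
    haveI : Finite {L : IntermediateField F ↥K // jE L ≠ ⊤} := Subtype.finite
    letI : Fintype {L : IntermediateField F ↥K // jE L ≠ ⊤} := Fintype.ofFinite _
    have hWit : ∀ j : {L : IntermediateField F ↥K // jE L ≠ ⊤},
        ∃ δ : D, δ ≠ 0 ∧ δ * α * δ⁻¹ ∉ jE j.1 := fun j =>
      exists_conj_notMem hαnc (jE j.1) j.2
    obtain ⟨γ, hγ0, hγav⟩ := exists_avoid α (fun j : {L : IntermediateField F ↥K // jE L ≠ ⊤} => jE j.1) hWit
    refine ⟨γ, hγ0, ?_⟩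
    set A := Algebra.adjoin F {α, γ * α * γ⁻¹} with hAdef
    have hαA : α ∈ A := Algebra.subset_adjoin (Set.mem_insert _ _)
    have hβA : γ * α * γ⁻¹ ∈ A := Algebra.subset_adjoin (Set.mem_insert_of_mem _ rfl)
    have hKA : K ≤ A := by
      rw [hKdef, hAdef]
      exact Algebra.adjoin_mono (Set.singleton_subset_iff.mpr (Set.mem_insert _ _))
    set L0 := Subalgebra.centralizer F (A : Set D) with hL0def
    have hL0K : L0 ≤ K := fun z hz => hC z ((Subalgebra.mem_centralizer_iff F).mp hz α hαA)
    have hL0inv : ∀ z : D, z ∈ L0 → z⁻¹ ∈ L0 := by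
      intro z hz
      rcases eq_or_ne z 0 with rfl | hz0
      · simpa using L0.zero_mem
      rw [Subalgebra.mem_centralizer_iff] at hz ⊢
      intro g hg
      have h1 : z * g = g * z := (hz g hg).symm
      have key : z * (g * z⁻¹) = g := by
        rw [← mul_assoc, h1, mul_assoc, mul_inv_cancel₀ hz0, mul_one]
      calc g * z⁻¹ = z⁻¹ * (z * (g * z⁻¹)) := (inv_mul_cancel_left₀ hz0 _).symm
        _ = z⁻¹ * g := by rw [key]
    set L0' : Subalgebra F ↥K := L0.comap K.val with hL0'def
    have hmemL0' : ∀ u : ↥K, u ∈ L0' ↔ (u : D) ∈ L0 := fun u => Iff.rfl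
    have hL0'inv : ∀ u : ↥K, u ∈ L0' → u⁻¹ ∈ L0' := by
      intro u hu
      rw [hmemL0', hcoeInv]
      exact hL0inv _ hu
    set Lhat : IntermediateField F ↥K := L0'.toIntermediateField hL0'inv with hLhat
    have hLhatset : (Lhat : Set ↥K) = (L0' : Set ↥K) := rfl
    have himg : K.val '' (Lhat : Set ↥K) = (L0 : Set D) := by
      apply Set.eq_of_subset_of_subset
      · rintro _ ⟨u, hu, rfl⟩
        exact hu
      · intro z hz
        exact ⟨⟨z, hL0K hz⟩, hz, rfl⟩
    by_cases hEL : jE Lhat = ⊤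
    · -- "central" case: all of L0 is central, double centralizer dimension count
      have hcent : ∀ z ∈ L0, ∀ x : D, z * x = x * z := by
        intro z hz x
        have hx : x ∈ jE Lhat := hEL ▸ Algebra.mem_top
        exact (Subalgebra.mem_centralizer_iff F).mp hx z (by rw [himg]; exact hz)
      -- field structure on L0
      letI : CommRing ↥L0 := { (inferInstance : Ring ↥L0) with
        mul_comm := fun a b => Subtype.ext (hcent a.1 a.2 b.1) }
      letI : Field ↥L0 := fieldOfFiniteDimensional F ↥L0
      -- algebra of L0 on D
      letI : Algebra ↥L0 D := (Subalgebra.val L0).toRingHom.toAlgebra'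
        (fun z x => hcent z.1 z.2 x)
      haveI : IsScalarTower F ↥L0 D := ⟨fun c z d => by
        show ((c • z : ↥L0) : D) * d = c • ((z : D) * d)
        show (c • (z : D)) * d = c • ((z : D) * d)
        rw [smul_mul_assoc]⟩
      haveI : FiniteDimensional ↥L0 D := FiniteDimensional.right F ↥L0 D
      let ι : ↥L0 →+* ↥K :=
        { toFun := fun z => ⟨z.1, hL0K z.2⟩
          map_one' := rfl
          map_mul' := fun _ _ => rfl
          map_zero' := rfl
          map_add' := fun _ _ => rfl }
      letI : Algebra ↥L0 ↥K := ι.toAlgebra' (fun c x => mul_comm _ _)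
      let fD : ↥K →ₐ[↥L0] D :=
        { toRingHom := (Subalgebra.val K).toRingHom
          commutes' := fun z => rfl }
      have hKmaxD : ∀ x : D, (∀ k : ↥K, x * fD k = fD k * x) → ∃ k : ↥K, fD k = x := by
        intro x hx
        have h1 : α * x = x * α := (hx ⟨α, hαK⟩).symm
        exact ⟨⟨x, hC x h1⟩, rfl⟩
      have hZD : ∀ b : D, (∀ x, b * x = x * b) → b ∈ (algebraMap ↥L0 D).range := by
        intro b hb
        have hbL0 : b ∈ L0 := by
          rw [hL0def, Subalgebra.mem_centralizer_iff]
          intro g hg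
          exact (hb g).symm
        exact ⟨⟨b, hbL0⟩, rfl⟩
      have hD := @factF ↥L0 D ↥K _ _ _ (FiniteDimensional.right F ↥L0 D) _ _ fD hKmaxD hZD
      -- division ring structure on A
      letI : DivisionRing ↥A := divisionRingOfFiniteDimensional F ↥A
      let ιA : ↥L0 →+* ↥A :=
        { toFun := fun z => ⟨z.1, hKA (hL0K z.2)⟩
          map_one' := rfl
          map_mul' := fun _ _ => rfl
          map_zero' := rfl
          map_add' := fun _ _ => rfl }
      letI : Algebra ↥L0 ↥A := ιA.toAlgebra' (fun z x => Subtype.ext (hcent z.1 z.2 x.1))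
      haveI : IsScalarTower F ↥L0 ↥A := ⟨fun c z a => Subtype.ext (by
        show (c • (z : D)) * (a : D) = c • ((z : D) * (a : D))
        rw [smul_mul_assoc])⟩
      haveI : FiniteDimensional ↥L0 ↥A := FiniteDimensional.right F ↥L0 ↥A
      let fA : ↥K →ₐ[↥L0] ↥A :=
        { toFun := fun k => ⟨k.1, hKA k.2⟩
          map_one' := rfl
          map_mul' := fun _ _ => rfl
          map_zero' := rfl
          map_add' := fun _ _ => rfl
          commutes' := fun z => rfl }
      have hKmaxA : ∀ x : ↥A, (∀ k : ↥K, x * fA k = fA k * x) → ∃ k : ↥K, fA k = x := by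
        intro x hx
        have h1 : α * (x : D) = (x : D) * α := (congrArg Subtype.val (hx ⟨α, hαK⟩)).symm
        exact ⟨⟨(x : D), hC _ h1⟩, Subtype.ext rfl⟩
      have hZA : ∀ b : ↥A, (∀ x, b * x = x * b) → b ∈ (algebraMap ↥L0 ↥A).range := by
        intro b hb
        have hbL0 : (b : D) ∈ L0 := by
          rw [hL0def, Subalgebra.mem_centralizer_iff]
          intro g hg
          exact (congrArg Subtype.val (hb ⟨g, hg⟩)).symm
        exact ⟨⟨(b : D), hbL0⟩, Subtype.ext rfl⟩
      have hA := factF ↥L0 ↥A ↥K fA hKmaxA hZA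
      -- compare dimensions
      let AZ : Submodule ↥L0 D :=
        { carrier := A
          add_mem' := fun ha hb => A.add_mem ha hb
          zero_mem' := A.zero_mem
          smul_mem' := fun z d hd => by
            show (z : D) * d ∈ A
            exact A.mul_mem (hKA (hL0K z.2)) hd }
      let eAZ : ↥A ≃ₗ[↥L0] ↥AZ :=
        { toFun := fun a => ⟨a.1, a.2⟩
          invFun := fun a => ⟨a.1, a.2⟩
          map_add' := fun _ _ => rfl
          map_smul' := fun _ _ => rfl
          left_inv := fun _ => rfl
          right_inv := fun _ => rfl }
      have h1 : finrank ↥L0 ↥AZ = finrank ↥L0 D := by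
        have h2 := LinearEquiv.finrank_eq eAZ
        rw [← h2, hA, ← hD]
        rfl
      have htop : AZ = ⊤ := Submodule.eq_top_of_finrank_eq h1
      rw [eq_top_iff]
      intro z _
      show z ∈ A
      have hz : z ∈ AZ := htop ▸ Submodule.mem_top
      exact hz
    · exfalso
      apply hγav ⟨Lhat, hEL⟩
      show γ * α * γ⁻¹ ∈ jE Lhat
      rw [hjE, Subalgebra.mem_centralizer_iff]
      intro g hg
      rw [himg] at hg
      exact ((Subalgebra.mem_centralizer_iff F).mp hg _ hβA).symm

end HR

theorem stmt_17 (F : Type*) [Field F] (D : Type*) [DivisionRing D] [Algebra F D]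
    [FiniteDimensional F D] (α : D)
    (hmax : ∀ K : Subalgebra F D, (∀ x ∈ K, ∀ y ∈ K, x * y = y * x) →
      Algebra.adjoin F {α} ≤ K → K = Algebra.adjoin F {α}) :
    ∃ γ : D, γ ≠ 0 ∧ Algebra.adjoin F {α, γ * α * γ⁻¹} = ⊤ := by
  exact HR.main F D α hmax
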